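/- arXiv:2310.01349 — 2 statements merged into one kernel-verified Lean document; each statement's English description precedes it below -/
import Mathlib

section
/- Let n₀ : ℝ → ℝ be positive, concave and monotone increasing on the interval I' = [z₁ + Δ_d, z₂ + Δ_u], where Δ_d < 0 < Δ_u and z₁ < z₂. Define n_u(z) = n₀(z + Δ_u), n_d(z) = n₀(z + Δ_d), and w(z) = (n_u(z) − n_d(z))/√(n_u(z)). Then w is monotone decreasing on [z₁, z₂]. -/
theorem w_antitone_of_concave_increasing
    (n₀ : ℝ → ℝ) (z₁ z₂ Δd Δu : ℝ)
    (hΔd : Δd < 0) (hΔu : 0 < Δu) (hz : z₁ < z₂)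
    (hpos : ∀ z ∈ Set.Icc (z₁ + Δd) (z₂ + Δu), 0 < n₀ z)
    (hconc : ConcaveOn ℝ (Set.Icc (z₁ + Δd) (z₂ + Δu)) n₀)
    (hmono : MonotoneOn n₀ (Set.Icc (z₁ + Δd) (z₂ + Δu))) :
    AntitoneOn (fun z => (n₀ (z + Δu) - n₀ (z + Δd)) / Real.sqrt (n₀ (z + Δu)))
      (Set.Icc z₁ z₂) := by
  intro a ha b hb hab
  obtain ⟨ha1, ha2⟩ := ha
  obtain ⟨hb1, hb2⟩ := hb
  -- membership facts
  have mem_u : ∀ z, z₁ ≤ z → z ≤ z₂ → z + Δu ∈ Set.Icc (z₁ + Δd) (z₂ + Δu) := by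
    intro z h1 h2
    constructor <;> nlinarith
  have mem_d : ∀ z, z₁ ≤ z → z ≤ z₂ → z + Δd ∈ Set.Icc (z₁ + Δd) (z₂ + Δu) := by
    intro z h1 h2
    constructor <;> nlinarith
  have hau := mem_u a ha1 ha2
  have had := mem_d a ha1 ha2
  have hbu := mem_u b hb1 (le_refl _ |>.trans hb2)
  have hbd := mem_d b hb1 hb2
  -- numerators nonneg
  have hNa : 0 ≤ n₀ (a + Δu) - n₀ (a + Δd) := by
    have := hmono had hau (by linarith)
    linarith
  -- numerator decreasing: n₀(b+Δu) - n₀(b+Δd) ≤ n₀(a+Δu) - n₀(a+Δd)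
  have hNum : n₀ (b + Δu) - n₀ (b + Δd) ≤ n₀ (a + Δu) - n₀ (a + Δd) := by
    rcases eq_or_lt_of_le hab with rfl | hlt
    · exact le_rfl
    · set L : ℝ := (b - a) + (Δu - Δd) with hL
      have hLpos : 0 < L := by simp [hL]; linarith
      set s : ℝ := (Δu - Δd) / L with hs
      set t : ℝ := (b - a) / L with ht
      have hs0 : 0 ≤ s := by
        apply div_nonneg <;> linarith
      have ht0 : 0 ≤ t := by
        apply div_nonneg <;> linarith
      have hst : s + t = 1 := by
        rw [hs, ht, ← add_div, div_eq_one_iff_eq hLpos.ne', hL]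
        ring
      -- a+Δu = t • (a+Δd) + s • (b+Δu)
      have h1 : t * (a + Δd) + s * (b + Δu) = a + Δu := by
        rw [hs, ht, div_mul_eq_mul_div, div_mul_eq_mul_div, ← add_div, div_eq_iff hLpos.ne', hL]; ring
      have h2 : s * (a + Δd) + t * (b + Δu) = b + Δd := by
        rw [hs, ht, div_mul_eq_mul_div, div_mul_eq_mul_div, ← add_div, div_eq_iff hLpos.ne', hL]; ring
      have c1 := hconc.2 had hbu ht0 hs0 (by linarith)
      have c2 := hconc.2 had hbu hs0 ht0 hst
      simp only [smul_eq_mul] at c1 c2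
      rw [h1] at c1
      rw [h2] at c2
      have e : t * n₀ (a + Δd) + s * n₀ (b + Δu) + (s * n₀ (a + Δd) + t * n₀ (b + Δu))
          = n₀ (a + Δd) + n₀ (b + Δu) := by
        linear_combination (n₀ (a + Δd) + n₀ (b + Δu)) * hst
      linarith
  -- denominator facts
  have hposa : 0 < n₀ (a + Δu) := hpos _ hau
  have hposb : 0 < n₀ (b + Δu) := hpos _ hbu
  have hDa : 0 < Real.sqrt (n₀ (a + Δu)) := Real.sqrt_pos.mpr hposa
  have hD : Real.sqrt (n₀ (a + Δu)) ≤ Real.sqrt (n₀ (b + Δu)) := by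
    exact Real.sqrt_le_sqrt (hmono hau hbu (by linarith))
  simp only
  exact div_le_div₀ hNa hNum hDa hD
end

section
/- Let n₀ : ℝ → ℝ be positive, concave and monotone decreasing on the interval I' = [z₁ + Δ_d, z₂ + Δ_u], where Δ_d < 0 < Δ_u and z₁ < z₂. Define n_u(z) = n₀(z + Δ_d), n_d(z) = n₀(z + Δ_u), and w(z) = (n_u(z) − n_d(z))/√(n_u(z)). Then w is monotone increasing on [z₁, z₂]. -/
lemma concave_diff_aux {f : ℝ → ℝ} {s : Set ℝ} (hf : ConcaveOn ℝ s f)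
    {x y h : ℝ} (hx : x ∈ s) (hyh : y + h ∈ s) (hxy : x ≤ y) (hh : 0 < h) :
    f x + f (y + h) ≤ f (x + h) + f y := by
  have hD : 0 < y + h - x := by linarith
  set μ : ℝ := (y - x) / (y + h - x) with hμ
  have hμ0 : 0 ≤ μ := div_nonneg (by linarith) hD.le
  have hμ1 : μ ≤ 1 := (div_le_one hD).2 (by linarith)
  have h1 := hf.2 hx hyh hμ0 (by linarith : (0:ℝ) ≤ 1 - μ) (by ring)
  have h2 := hf.2 hyh hx hμ0 (by linarith : (0:ℝ) ≤ 1 - μ) (by ring)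
  simp only [smul_eq_mul] at h1 h2
  have e1 : μ * x + (1 - μ) * (y + h) = x + h := by
    rw [hμ]; field_simp [hD.ne']; ring
  have e2 : μ * (y + h) + (1 - μ) * x = y := by
    rw [hμ]; field_simp [hD.ne']; ring
  rw [e1] at h1
  rw [e2] at h2
  nlinarith [h1, h2]

theorem w_monotone_of_concave_decreasing
    (n₀ : ℝ → ℝ) (z₁ z₂ Δd Δu : ℝ)
    (hΔd : Δd < 0) (hΔu : 0 < Δu) (hz : z₁ < z₂)
    (hpos : ∀ z ∈ Set.Icc (z₁ + Δd) (z₂ + Δu), 0 < n₀ z)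
    (hconc : ConcaveOn ℝ (Set.Icc (z₁ + Δd) (z₂ + Δu)) n₀)
    (hanti : AntitoneOn n₀ (Set.Icc (z₁ + Δd) (z₂ + Δu))) :
    MonotoneOn (fun z => (n₀ (z + Δd) - n₀ (z + Δu)) / Real.sqrt (n₀ (z + Δd)))
      (Set.Icc z₁ z₂) := by
  intro a ha b hb hab
  obtain ⟨ha1, ha2⟩ := ha
  obtain ⟨hb1, hb2⟩ := hb
  have mad : a + Δd ∈ Set.Icc (z₁ + Δd) (z₂ + Δu) := ⟨by linarith, by linarith⟩
  have mau : a + Δu ∈ Set.Icc (z₁ + Δd) (z₂ + Δu) := ⟨by linarith, by linarith⟩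
  have mbd : b + Δd ∈ Set.Icc (z₁ + Δd) (z₂ + Δu) := ⟨by linarith, by linarith⟩
  have mbu : b + Δu ∈ Set.Icc (z₁ + Δd) (z₂ + Δu) := ⟨by linarith, by linarith⟩
  have key := concave_diff_aux hconc (x := a + Δd) (y := b + Δd) (h := Δu - Δd)
    mad (by rw [show b + Δd + (Δu - Δd) = b + Δu by ring]; exact mbu)
    (by linarith) (by linarith)
  rw [show a + Δd + (Δu - Δd) = a + Δu by ring,
      show b + Δd + (Δu - Δd) = b + Δu by ring] at key
  have hA : 0 < n₀ (a + Δd) := hpos _ mad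
  have hC : 0 < n₀ (b + Δd) := hpos _ mbd
  have hCA : n₀ (b + Δd) ≤ n₀ (a + Δd) := hanti mad mbd (by linarith)
  have hDC : n₀ (b + Δu) ≤ n₀ (b + Δd) := hanti mbd mbu (by linarith)
  simp only
  exact div_le_div₀ (by linarith) (by linarith) (Real.sqrt_pos.2 hC)
    (Real.sqrt_le_sqrt hCA)
end
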